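/- In a strongly connected directed graph G = (V, A) with a subset S ⊆ V such that G(V\S) is strongly connected, any two arcs e ∈ δ⁺(S), f ∈ δ⁻(S) whose S-endpoints lie in the same weakly-connected, strongly connected component S_i of G(S) can be extended to a directed closed walk of G that crosses the boundary δ(S) exactly twice (once via e and once via f). -/
import Mathlib

section Aux

variable {V A : Type} (tail head : A → V)

/-- `IsWalk tail head l u v` : the list of arcs `l` forms a directed walk from `u` to `v`. -/
def IsWalk : List A → V → V → Prop
  | [], u, v => u = v
  | a :: l, u, v => tail a = u ∧ IsWalk l (head a) v

lemma IsWalk.append {l m : List A} {u v w : V}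
    (hl : IsWalk tail head l u v) (hm : IsWalk tail head m v w) :
    IsWalk tail head (l ++ m) u w := by
  induction l generalizing u with
  | nil => cases hl; simpa using hm
  | cons a l ih =>
    obtain ⟨h1, h2⟩ := hl
    exact ⟨h1, ih h2⟩

lemma rtg_walk {P : A → Prop} {r : V → V → Prop}
    (hr : ∀ x y, r x y → ∃ a, tail a = x ∧ head a = y ∧ P a)
    {u v : V} (h : Relation.ReflTransGen r u v) :
    ∃ l : List A, IsWalk tail head l u v ∧ ∀ a ∈ l, P a := by
  induction h using Relation.ReflTransGen.head_induction_on with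
  | refl => exact ⟨[], rfl, by simp⟩
  | head hab _ ih =>
    obtain ⟨l, hl, hP⟩ := ih
    obtain ⟨a, ha1, ha2, ha3⟩ := hr _ _ hab
    exact ⟨a :: l, ⟨ha1, ha2 ▸ hl⟩, by
      intro b hb
      rcases List.mem_cons.1 hb with h | h
      · exact h ▸ ha3
      · exact hP b h⟩

lemma walk_first {l : List A} {u v : V} (h : IsWalk tail head l u v)
    (hl : 0 < l.length) : tail (l[0]) = u := by
  cases l with
  | nil => simp at hl
  | cons a l => exact h.1

lemma walk_chain {l : List A} {u v : V} (h : IsWalk tail head l u v) :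
    ∀ i, (hi : i + 1 < l.length) → head (l[i]) = tail (l[i + 1]) := by
  induction l generalizing u with
  | nil => simp
  | cons a l ih =>
    intro i hi
    cases i with
    | zero =>
      simp only [List.getElem_cons_zero, List.getElem_cons_succ]
      exact (walk_first tail head h.2 (by simpa using hi)).symm
    | succ n =>
      simp only [List.getElem_cons_succ]
      exact ih h.2 n (by simpa using hi)

lemma walk_last {l : List A} {u v : V} (h : IsWalk tail head l u v)
    (hl : 0 < l.length) : head (l[l.length - 1]) = v := by
  induction l generalizing u with
  | nil => simp at hl
  | cons a l ih =>
    cases l with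
    | nil => exact h.2.symm ▸ rfl
    | cons b l =>
      have := ih h.2 (by simp)
      simpa using this

lemma get_mid (l1 : List A) (f : A) (l2 : List A) :
    (l1 ++ f :: l2)[l1.length]'(by simp) = f := by
  induction l1 with
  | nil => rfl
  | cons a l1 ih => simpa using ih

lemma get_split (l1 : List A) (f : A) (l2 : List A) :
    ∀ m, (hm : m < (l1 ++ f :: l2).length) →
      (l1 ++ f :: l2)[m] ∈ l1 ∨ (m = l1.length ∧ (l1 ++ f :: l2)[m] = f) ∨
      (l1 ++ f :: l2)[m] ∈ l2 := by
  induction l1 with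
  | nil =>
    intro m hm
    cases m with
    | zero => exact Or.inr (Or.inl ⟨rfl, rfl⟩)
    | succ n =>
      right; right
      simpa using List.getElem_mem (l := l2) (i := n) (by simpa using hm)
  | cons a l1 ih =>
    intro m hm
    cases m with
    | zero => exact Or.inl (by simp)
    | succ n =>
      rcases ih n (by simpa using hm) with h | ⟨h1, h2⟩ | h
      · exact Or.inl (by simpa using Or.inr h)
      · exact Or.inr (Or.inl ⟨by simp [h1], by simpa using h2⟩)
      · exact Or.inr (Or.inr (by simpa using h))

end Aux

/-- In a strongly connected digraph `G` with `S ⊆ V` such that `G(V\S)` is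
strongly connected, any arc `e` leaving a strongly connected component `Si` of
`G(S)` and any arc `f` entering `Si` extend to a directed closed walk of `G`
crossing the boundary `δ(S)` exactly twice: once via `e` and once via `f`. -/
theorem closed_walk_crossing_boundary_twice
    {V A : Type} [Fintype V] [Fintype A]
    (tail head : A → V)
    (hstrong : ∀ u v : V, Relation.ReflTransGen
      (fun x y => ∃ a, tail a = x ∧ head a = y) u v)
    (S : Set V) (hne : S.Nonempty) (hproper : S ≠ Set.univ)
    (hVS : ∀ u ∉ S, ∀ v ∉ S, Relation.ReflTransGen
      (fun x y => ∃ a, tail a = x ∧ head a = y ∧ x ∉ S ∧ y ∉ S) u v)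
    (Si : Set V) (hSiS : Si ⊆ S) (hSine : Si.Nonempty)
    (hSistrong : ∀ u ∈ Si, ∀ v ∈ Si, Relation.ReflTransGen
      (fun x y => ∃ a, tail a = x ∧ head a = y ∧ x ∈ Si ∧ y ∈ Si) u v)
    (e f : A)
    (he : tail e ∈ Si ∧ head e ∉ S)
    (hf : tail f ∉ S ∧ head f ∈ Si) :
    ∃ (k : ℕ) (w : Fin (k + 1) → V) (es : Fin k → A) (j₁ j₂ : Fin k),
      (∀ j : Fin k, tail (es j) = w j.castSucc ∧ head (es j) = w j.succ) ∧
      w 0 = w (Fin.last k) ∧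
      es j₁ = e ∧ es j₂ = f ∧
      (∀ j : Fin k, (tail (es j) ∈ S ∧ head (es j) ∉ S) → j = j₁) ∧
      (∀ j : Fin k, (tail (es j) ∉ S ∧ head (es j) ∈ S) → j = j₂) := by
  -- path in V\S from head e to tail f
  obtain ⟨l1, hl1w, hl1P⟩ := rtg_walk tail head
    (P := fun a => tail a ∉ S ∧ head a ∉ S)
    (fun x y ⟨a, h1, h2, h3, h4⟩ => ⟨a, h1, h2, h1 ▸ h3, h2 ▸ h4⟩)
    (hVS (head e) he.2 (tail f) hf.1)
  -- path in Si from head f to tail e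
  obtain ⟨l2, hl2w, hl2P⟩ := rtg_walk tail head
    (P := fun a => tail a ∈ Si ∧ head a ∈ Si)
    (fun x y ⟨a, h1, h2, h3, h4⟩ => ⟨a, h1, h2, h1 ▸ h3, h2 ▸ h4⟩)
    (hSistrong (head f) hf.2 (tail e) he.1)
  set L : List A := e :: (l1 ++ f :: l2) with hL
  have hLwalk : IsWalk tail head L (tail e) (tail e) :=
    ⟨rfl, hl1w.append tail head ⟨rfl, hl2w⟩⟩
  set k := L.length with hk
  have hklen : k = l1.length + (l2.length + 1) + 1 := by simp [hk, hL]
  have hk0 : 0 < k := by omega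
  have hj2 : l1.length + 1 < k := by omega
  refine ⟨k,
    fun i => if h : i.val < k then tail (L[i.val]) else tail e,
    fun j => L[j.val], ⟨0, hk0⟩, ⟨l1.length + 1, hj2⟩, ?_, ?_, ?_, ?_, ?_, ?_⟩
  · intro j
    constructor
    · have h : (j.castSucc : ℕ) < k := by simpa using j.isLt
      simp only [dif_pos h]
      rfl
    · have hsucc : (j.succ : ℕ) = j.val + 1 := rfl
      by_cases h : j.val + 1 < k
      · simp only [hsucc, dif_pos h]
        exact walk_chain tail head hLwalk j.val h
      · simp only [hsucc, dif_neg h]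
        have hlast := walk_last tail head hLwalk hk0
        have hj : j.val = k - 1 := by have := j.isLt; omega
        rw [← hlast]
        simp only [hk] at hj
        simp only [hj]
  · simp only [Fin.val_zero, Fin.val_last, dif_pos hk0, dif_neg (lt_irrefl k)]
    exact walk_first tail head hLwalk hk0
  · rfl
  · show L[l1.length + 1] = f
    simpa [hL] using get_mid l1 f l2
  · -- uniqueness of the outgoing crossing
    rintro ⟨j, hjk⟩ ⟨ht, hh⟩
    ext
    show j = 0
    by_contra hj0
    obtain ⟨n, rfl⟩ : ∃ n, j = n + 1 := ⟨j - 1, by omega⟩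
    simp only [hL, List.getElem_cons_succ] at ht hh
    have hn : n < (l1 ++ f :: l2).length := by
      simp only [List.length_append, List.length_cons]; omega
    rcases get_split l1 f l2 n hn with h | ⟨_, h⟩ | h
    · exact (hl1P _ h).1 ht
    · rw [h] at ht; exact hf.1 ht
    · exact hh (hSiS (hl2P _ h).2)
  · -- uniqueness of the incoming crossing
    rintro ⟨j, hjk⟩ ⟨ht, hh⟩
    ext
    show j = l1.length + 1
    rcases Nat.eq_zero_or_pos j with rfl | hj0
    · simp only [hL, List.getElem_cons_zero] at ht
      exact absurd (hSiS he.1) ht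
    obtain ⟨n, rfl⟩ : ∃ n, j = n + 1 := ⟨j - 1, by omega⟩
    simp only [hL, List.getElem_cons_succ] at ht hh
    have hn : n < (l1 ++ f :: l2).length := by
      simp only [List.length_append, List.length_cons]; omega
    rcases get_split l1 f l2 n hn with h | ⟨h1, _⟩ | h
    · exact absurd hh (hl1P _ h).2
    · omega
    · exact absurd (hSiS (hl2P _ h).1) ht
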